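/- Let G=(V,E) be a finite connected graph with m edges, let w_{0,e}>0 be initial weights, and fix a step size s with 0<s<1/(2m+2). Define iterates by w_e^{(0)}=w_{0,e} and w_e^{(j+1)} = w_e^{(j)} + s·(−κ_e^{(j)} + (∑_{τ∈E} κ_τ^{(j)}·ρ_τ^{(j)})/(∑_{τ∈E} w_τ^{(j)}))·ρ_e^{(j)}, where ρ_e^{(j)} and κ_e^{(j)} denote the distance and Lin–Lu–Yau's Ricci curvature of the edge e computed from the weights w^{(j)} (the defining limits are assumed to exist at every step, and the curvature satisfies the bounds −(2/ρ_e)·max_{τ∈E} w_τ ≤ κ_e ≤ 2). Then every iterate is strictly positive (so the flow has a unique global solution) and for all j∈ℕ and all e∈E: (1−2(m+1)s)^j·w_{0,e} ≤ w_e^{(j)} ≤ (1+2(m+1)s)^j·∑_{τ∈E} w_{0,τ}. -/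
import Mathlib


open Finset

section RicciDefs

variable {V : Type*}

/-- The sum of the weights of the edges of a walk. -/
noncomputable def walkWeight {G : SimpleGraph V} (w : Sym2 V → ℝ) {u v : V} (p : G.Walk u v) : ℝ :=
  (p.edges.map w).sum

/-- The weighted graph distance: infimum of total weight over walks joining `u` and `v`. -/
noncomputable def gdist (G : SimpleGraph V) (w : Sym2 V → ℝ) (u v : V) : ℝ :=
  sInf {x : ℝ | ∃ p : G.Walk u v, x = walkWeight w p}

/-- A choice of ordered endpoints of an unordered pair. -/
noncomputable def endpoints (e : Sym2 V) : V × V := Quot.out e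

/-- The weighted distance between the endpoints of an edge. -/
noncomputable def edist (G : SimpleGraph V) (w : Sym2 V → ℝ) (e : Sym2 V) : ℝ :=
  gdist G w (endpoints e).1 (endpoints e).2

/-- The `α`-lazy one-step random walk at `x`. -/
noncomputable def lazyWalk (G : SimpleGraph V) [Fintype V] [DecidableEq V] [DecidableRel G.Adj]
    (w : Sym2 V → ℝ) (α : ℝ) (x : V) : V → ℝ := fun z =>
  if z = x then α
  else if G.Adj x z then (1 - α) * w s(x, z) / ∑ u ∈ G.neighborFinset x, w s(x, u)
  else 0

/-- A probability measure on a finite vertex set. -/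
def IsProbMeasure [Fintype V] (μ : V → ℝ) : Prop :=
  (∀ x, 0 ≤ μ x) ∧ ∑ x, μ x = 1

/-- A coupling between two probability measures. -/
def IsCoupling [Fintype V] (μ₁ μ₂ : V → ℝ) (A : V → V → ℝ) : Prop :=
  (∀ u v, A u v ∈ Set.Icc (0 : ℝ) 1) ∧ (∀ u, ∑ x, A u x = μ₁ u) ∧ (∀ v, ∑ y, A y v = μ₂ v)

/-- The Wasserstein distance between two probability measures. -/
noncomputable def wasserstein [Fintype V] (G : SimpleGraph V) (w : Sym2 V → ℝ)
    (μ₁ μ₂ : V → ℝ) : ℝ :=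
  sInf {x : ℝ | ∃ A : V → V → ℝ, IsCoupling μ₁ μ₂ A ∧ x = ∑ u, ∑ v, A u v * gdist G w u v}

/-- Ollivier's `α`-Ricci curvature of an edge. -/
noncomputable def ollivier [Fintype V] [DecidableEq V] (G : SimpleGraph V) [DecidableRel G.Adj]
    (w : Sym2 V → ℝ) (α : ℝ) (e : Sym2 V) : ℝ :=
  1 - wasserstein G w (lazyWalk G w α (endpoints e).1) (lazyWalk G w α (endpoints e).2)
        / edist G w e

end RicciDefs

section Aux

variable {V : Type*} [Fintype V] [DecidableEq V]

lemma walkWeight_nonneg {G : SimpleGraph V} {w : Sym2 V → ℝ}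
    (hpos : ∀ e ∈ G.edgeSet, 0 < w e) {u v : V} (p : G.Walk u v) :
    0 ≤ walkWeight w p := by
  unfold walkWeight
  apply List.sum_nonneg
  intro x hx
  obtain ⟨e, he, rfl⟩ := List.mem_map.mp hx
  exact (hpos e (p.edges_subset_edgeSet he)).le

lemma edist_bounds (G : SimpleGraph V) [DecidableRel G.Adj] {w : Sym2 V → ℝ}
    (hpos : ∀ e ∈ G.edgeFinset, 0 < w e) {e : Sym2 V} (he : e ∈ G.edgeFinset) :
    0 < edist G w e ∧ edist G w e ≤ w e := by
  have hpos' : ∀ τ ∈ G.edgeSet, 0 < w τ := fun τ hτ =>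
    hpos τ (SimpleGraph.mem_edgeFinset.mpr hτ)
  have hmk : s((endpoints e).1, (endpoints e).2) = e := Quot.out_eq e
  have heS : e ∈ G.edgeSet := SimpleGraph.mem_edgeFinset.mp he
  have hadj : G.Adj (endpoints e).1 (endpoints e).2 := by
    rw [← hmk] at heS
    exact heS
  have hne : (endpoints e).1 ≠ (endpoints e).2 := hadj.ne
  -- the one-edge walk
  set p₀ : G.Walk (endpoints e).1 (endpoints e).2 :=
    SimpleGraph.Walk.cons hadj SimpleGraph.Walk.nil with hp₀
  have hwp₀ : walkWeight w p₀ = w e := by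
    simp [hp₀, walkWeight, hmk]
  have hSne : (Set.univ : Set ℝ) ≠ ∅ := by simp
  set T : Set ℝ := {x : ℝ | ∃ p : G.Walk (endpoints e).1 (endpoints e).2, x = walkWeight w p}
    with hT
  have hTne : T.Nonempty := ⟨walkWeight w p₀, ⟨p₀, rfl⟩⟩
  have hEne : G.edgeFinset.Nonempty := ⟨e, he⟩
  set cmin : ℝ := G.edgeFinset.inf' hEne w with hcmin
  have hcmin_pos : 0 < cmin := by
    obtain ⟨τ, hτ, hτe⟩ := Finset.exists_mem_eq_inf' hEne w
    rw [hcmin, hτe]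
    exact hpos τ hτ
  have hkey : ∀ (a b : V), a ≠ b → ∀ p : G.Walk a b, cmin ≤ walkWeight w p := by
    intro a b hab p
    cases p with
    | nil => exact absurd rfl hab
    | @cons _ y _ h q =>
      have h1 : walkWeight w (SimpleGraph.Walk.cons h q) =
          w s(a, y) + walkWeight w q := by
        simp [walkWeight]
      rw [h1]
      have h2 : cmin ≤ w s(a, y) :=
        Finset.inf'_le w (SimpleGraph.mem_edgeFinset.mpr h)
      have h3 : 0 ≤ walkWeight w q := walkWeight_nonneg hpos' q
      linarith
  have hlb : ∀ x ∈ T, cmin ≤ x := by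
    rintro x ⟨p, rfl⟩
    exact hkey _ _ hne p
  have hbdd : BddBelow T := ⟨cmin, hlb⟩
  constructor
  · exact lt_of_lt_of_le hcmin_pos (le_csInf hTne hlb)
  · calc edist G w e ≤ walkWeight w p₀ := csInf_le hbdd ⟨p₀, rfl⟩
      _ = w e := hwp₀

end Aux

set_option maxHeartbeats 1000000 in
/-- Theorem 2.2 (ii): bounds for the discrete quasi-normalized Ricci curvature flow with
Lin–Lu–Yau's curvature. -/
theorem lly_quasi_normalized_flow_bounds {V : Type*} [Fintype V] [DecidableEq V]
    (G : SimpleGraph V) [DecidableRel G.Adj] (hconn : G.Connected)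
    (m : ℕ) (hm : G.edgeFinset.card = m)
    (s : ℝ) (hs0 : 0 < s) (hs1 : s < 1 / (2 * (m : ℝ) + 2))
    (w : ℕ → Sym2 V → ℝ) (κ : ℕ → Sym2 V → ℝ)
    (hpos0 : ∀ e ∈ G.edgeFinset, 0 < w 0 e)
    -- the Lin–Lu–Yau curvature κ is the limit of κ^α/(1-α) as α → 1⁻, assumed to exist
    (hLLY : ∀ j : ℕ, ∀ e ∈ G.edgeFinset,
      Filter.Tendsto (fun α : ℝ => ollivier G (w j) α e / (1 - α))
        (nhdsWithin 1 (Set.Iio 1)) (nhds (κ j e)))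
    -- the curvature bounds −(2/ρ_e)·max_{τ∈E} w_τ ≤ κ_e ≤ 2
    (hbound : ∀ (j : ℕ) (e : Sym2 V) (he : e ∈ G.edgeFinset),
      -(2 / edist G (w j) e) * G.edgeFinset.sup' ⟨e, he⟩ (w j) ≤ κ j e ∧ κ j e ≤ 2)
    (hflow : ∀ j : ℕ, ∀ e ∈ G.edgeFinset,
      w (j + 1) e = w j e +
        s * (-(κ j e) +
          (∑ τ ∈ G.edgeFinset, κ j τ * edist G (w j) τ) /
            (∑ τ ∈ G.edgeFinset, w j τ)) * edist G (w j) e) :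
    ∀ j : ℕ, ∀ e ∈ G.edgeFinset,
      0 < w j e ∧
      (1 - 2 * ((m : ℝ) + 1) * s) ^ j * w 0 e ≤ w j e ∧
      w j e ≤ (1 + 2 * ((m : ℝ) + 1) * s) ^ j * ∑ τ ∈ G.edgeFinset, w 0 τ := by
  set c : ℝ := 2 * ((m : ℝ) + 1) * s with hcdef
  have hm0 : (0 : ℝ) ≤ (m : ℝ) := Nat.cast_nonneg m
  have hc_pos : 0 < c := by positivity
  have hc1 : c < 1 := by
    have h2 : (0 : ℝ) < 2 * (m : ℝ) + 2 := by positivity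
    have := (lt_div_iff₀ h2).mp hs1
    rw [hcdef]; nlinarith
  have key : ∀ j : ℕ, (∀ e ∈ G.edgeFinset, 0 < w j e ∧ (1 - c) ^ j * w 0 e ≤ w j e) ∧
      ∑ τ ∈ G.edgeFinset, w j τ ≤ (1 + c) ^ j * ∑ τ ∈ G.edgeFinset, w 0 τ := by
    intro j
    induction j with
    | zero => exact ⟨fun e he => ⟨hpos0 e he, by simp⟩, by simp⟩
    | succ j ih =>
      obtain ⟨ihpos, ihsum⟩ := ih
      by_cases hE : G.edgeFinset.Nonempty
      · set S := ∑ τ ∈ G.edgeFinset, w j τ with hSdef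
        have hS : 0 < S := Finset.sum_pos (fun e he => (ihpos e he).1) hE
        set M := G.edgeFinset.sup' hE (w j) with hMdef
        have hMS : M ≤ S := Finset.sup'_le hE _ (fun e he =>
          Finset.single_le_sum (fun τ hτ => (ihpos τ hτ).1.le) he)
        have hρ : ∀ e ∈ G.edgeFinset, 0 < edist G (w j) e ∧ edist G (w j) e ≤ w j e :=
          fun e he => edist_bounds G (fun τ hτ => (ihpos τ hτ).1) he
        set K := ∑ τ ∈ G.edgeFinset, κ j τ * edist G (w j) τ with hKdef
        have hκρ : ∀ e ∈ G.edgeFinset,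
            -(2 * M) ≤ κ j e * edist G (w j) e ∧ κ j e * edist G (w j) e ≤ 2 * w j e := by
          intro e he
          obtain ⟨hρ0, hρw⟩ := hρ e he
          obtain ⟨hb1, hb2⟩ := hbound j e he
          constructor
          · have hb1' : -(2 * M) / edist G (w j) e ≤ κ j e := by
              have : -(2 / edist G (w j) e) * M = -(2 * M) / edist G (w j) e := by
                field_simp
              rw [← this]
              exact hb1
            have := (div_le_iff₀ hρ0).mp hb1'
            linarith
          · nlinarith
        have hKle : K ≤ 2 * S := by
          rw [hKdef, hSdef, Finset.mul_sum]
          exact Finset.sum_le_sum fun τ hτ => (hκρ τ hτ).2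
        have hKge : -(2 * (m : ℝ)) * S ≤ K := by
          have h1 : ∑ τ ∈ G.edgeFinset, -(2 * M) ≤ K :=
            Finset.sum_le_sum fun τ hτ => (hκρ τ hτ).1
          have h2 : ∑ τ ∈ G.edgeFinset, -(2 * M) = -(2 * M) * (m : ℝ) := by
            rw [Finset.sum_const, hm]
            push_cast
            ring
          nlinarith
        have hQle : K / S ≤ 2 := by
          rw [div_le_iff₀ hS]; linarith
        have hQge : -(2 * (m : ℝ)) ≤ K / S := by
          rw [le_div_iff₀ hS]; linarith
        have hstep : ∀ e ∈ G.edgeFinset,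
            (1 - c) * w j e ≤ w (j + 1) e ∧
            w (j + 1) e ≤ w j e + 2 * s * M + 2 * s * w j e := by
          intro e he
          obtain ⟨hρ0, hρw⟩ := hρ e he
          obtain ⟨hκρ1, hκρ2⟩ := hκρ e he
          obtain ⟨hb1, hb2⟩ := hbound j e he
          rw [hflow j e he, ← hSdef, ← hKdef]
          constructor
          · have hX : -(2 * (m : ℝ) + 2) ≤ -(κ j e) + K / S := by linarith
            have h1 : s * (-(2 * (m : ℝ) + 2)) * edist G (w j) e ≤
                s * (-(κ j e) + K / S) * edist G (w j) e := by
              apply mul_le_mul_of_nonneg_right _ hρ0.le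
              exact mul_le_mul_of_nonneg_left hX hs0.le
            have h2 : -(c * w j e) ≤ s * (-(2 * (m : ℝ) + 2)) * edist G (w j) e := by
              have hcoef : (0 : ℝ) ≤ s * (2 * (m : ℝ) + 2) := by positivity
              have := mul_le_mul_of_nonneg_left hρw hcoef
              rw [hcdef]
              nlinarith
            linarith
          · have h1 : s * (-(κ j e) + K / S) * edist G (w j) e =
                s * (-(κ j e * edist G (w j) e) + (K / S) * edist G (w j) e) := by ring
            have h2 : (K / S) * edist G (w j) e ≤ 2 * w j e := by
              have := mul_le_mul_of_nonneg_right hQle hρ0.le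
              nlinarith
            rw [h1]
            nlinarith
        have h1c : 0 < 1 - c := by linarith
        refine ⟨fun e he => ?_, ?_⟩
        · obtain ⟨hlo, _⟩ := hstep e he
          have hw : 0 < w j e := (ihpos e he).1
          refine ⟨lt_of_lt_of_le (by positivity) hlo, ?_⟩
          calc (1 - c) ^ (j + 1) * w 0 e = (1 - c) * ((1 - c) ^ j * w 0 e) := by ring
            _ ≤ (1 - c) * w j e := mul_le_mul_of_nonneg_left (ihpos e he).2 h1c.le
            _ ≤ w (j + 1) e := hlo
        · calc ∑ τ ∈ G.edgeFinset, w (j + 1) τ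
              ≤ ∑ τ ∈ G.edgeFinset, (w j τ + 2 * s * M + 2 * s * w j τ) :=
                Finset.sum_le_sum fun τ hτ => (hstep τ hτ).2
            _ = S + (m : ℝ) * (2 * s * M) + 2 * s * S := by
                rw [Finset.sum_add_distrib, Finset.sum_add_distrib, Finset.sum_const, hm,
                  ← Finset.mul_sum, ← hSdef, nsmul_eq_mul]
            _ ≤ (1 + c) * S := by
                have h3 : (0 : ℝ) ≤ 2 * s * (m : ℝ) := by positivity
                have := mul_le_mul_of_nonneg_left hMS h3
                rw [hcdef]
                nlinarith
            _ ≤ (1 + c) * ((1 + c) ^ j * ∑ τ ∈ G.edgeFinset, w 0 τ) :=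
                mul_le_mul_of_nonneg_left ihsum (by linarith)
            _ = (1 + c) ^ (j + 1) * ∑ τ ∈ G.edgeFinset, w 0 τ := by ring
      · rw [Finset.not_nonempty_iff_eq_empty] at hE
        refine ⟨fun e he => absurd he (by simp [hE]), ?_⟩
        simp [hE]
  intro j e he
  obtain ⟨h1, h2⟩ := (key j).1 e he
  refine ⟨h1, h2, ?_⟩
  calc w j e ≤ ∑ τ ∈ G.edgeFinset, w j τ :=
      Finset.single_le_sum (fun τ hτ => ((key j).1 τ hτ).1.le) he
    _ ≤ _ := (key j).2
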